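/- Suppose Ω_{t-1} is symmetric positive definite with all eigenvalues in (0,1], β, ρ > 0, and M is symmetric positive semi-definite. Then Ω_t := ((β Ω_{t-1}^{-1} + ρ I + M)/(β+ρ))^{-1} is symmetric positive definite with all eigenvalues in (0,1]. -/

import Mathlib

open Matrix

section Aux

variable {n : Type*} [Fintype n] [DecidableEq n]

open scoped MatrixOrder

lemma posSemidef_smul {A : Matrix n n ℝ} (hA : A.PosSemidef) {c : ℝ} (hc : 0 ≤ c) :
    (c • A).PosSemidef := by
  refine ⟨?_, fun x => ?_⟩
  · show (c • A)ᴴ = c • A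
    rw [conjTranspose_smul, hA.isHermitian.eq]
    simp
  · exact (hA.smul hc).2 x

lemma posDef_smul {A : Matrix n n ℝ} (hA : A.PosDef) {c : ℝ} (hc : 0 < c) :
    (c • A).PosDef := by
  refine ⟨?_, fun x hx => ?_⟩
  · show (c • A)ᴴ = c • A
    rw [conjTranspose_smul, hA.isHermitian.eq]
    simp
  · exact (hA.smul hc).2 hx

lemma sqrt_inv_conj {B : Matrix n n ℝ} (hB : B.PosDef) :
    CFC.sqrt B⁻¹ * B * CFC.sqrt B⁻¹ = 1 := by
  set S : Matrix n n ℝ := CFC.sqrt B⁻¹ with hS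
  have hSS : S * S = B⁻¹ := CFC.sqrt_mul_sqrt_self _ hB.inv.posSemidef.nonneg
  have hSdet : IsUnit S.det := by
    have h2 : S.det * S.det = B⁻¹.det := by rw [← det_mul, hSS]
    have hBdet : B⁻¹.det ≠ 0 := hB.inv.det_pos.ne'
    have hne : S.det ≠ 0 := fun h => hBdet (by rw [← h2, h, mul_zero])
    exact hne.isUnit
  have hSinv : S * S⁻¹ = 1 := mul_nonsing_inv _ hSdet
  have hSinv' : S⁻¹ * S = 1 := nonsing_inv_mul _ hSdet
  have hBB : B⁻¹⁻¹ = B := nonsing_inv_nonsing_inv _ (isUnit_iff_isUnit_det _ |>.1 hB.isUnit)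
  rw [← hBB, ← hSS, Matrix.mul_inv_rev, ← mul_assoc, mul_assoc (S * S⁻¹), hSinv, one_mul, hSinv']

/-- If `B` is positive definite and `B - 1` is PSD, then `1 - B⁻¹` is PSD. -/
lemma one_sub_inv_posSemidef {B : Matrix n n ℝ} (hB : B.PosDef)
    (hB1 : (B - 1).PosSemidef) : ((1 : Matrix n n ℝ) - B⁻¹).PosSemidef := by
  set S : Matrix n n ℝ := CFC.sqrt B⁻¹ with hS
  have key : (S * (B - 1) * Sᴴ).PosSemidef := hB1.mul_mul_conjTranspose_same S
  have hSH : Sᴴ = S := (CFC.sqrt_nonneg B⁻¹).posSemidef.isHermitian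
  rw [hSH] at key
  have : S * (B - 1) * S = 1 - B⁻¹ := by
    rw [Matrix.mul_sub, Matrix.sub_mul, mul_one, sqrt_inv_conj hB,
      CFC.sqrt_mul_sqrt_self _ hB.inv.posSemidef.nonneg]
  rwa [this] at key

/-- If `B` is positive definite and `1 - B` is PSD, then `B⁻¹ - 1` is PSD. -/
lemma inv_sub_one_posSemidef {B : Matrix n n ℝ} (hB : B.PosDef)
    (hB1 : ((1 : Matrix n n ℝ) - B).PosSemidef) : (B⁻¹ - 1).PosSemidef := by
  set S : Matrix n n ℝ := CFC.sqrt B⁻¹ with hS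
  have key : (S * (1 - B) * Sᴴ).PosSemidef := hB1.mul_mul_conjTranspose_same S
  have hSH : Sᴴ = S := (CFC.sqrt_nonneg B⁻¹).posSemidef.isHermitian
  rw [hSH] at key
  have : S * (1 - B) * S = B⁻¹ - 1 := by
    rw [Matrix.mul_sub, Matrix.sub_mul, mul_one, sqrt_inv_conj hB,
      CFC.sqrt_mul_sqrt_self _ hB.inv.posSemidef.nonneg]
  rwa [this] at key

end Aux

/-- If Ω_{t-1} is symmetric PD with eigenvalues in (0,1], β, ρ > 0, and M is PSD, then
Ω_t = ((β Ω_{t-1}⁻¹ + ρ I + M)/(β+ρ))⁻¹ is symmetric PD with eigenvalues in (0,1].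
(For a symmetric matrix, eigenvalues in (0,1] is equivalent to PosDef together with
I − Ω being PosSemidef.) -/
theorem omega_update_eigenvalues_in_unit_interval {m : ℕ}
    (Ω M : Matrix (Fin m) (Fin m) ℝ) (β ρ : ℝ)
    (hβ : 0 < β) (hρ : 0 < ρ)
    (hΩ : Ω.PosDef) (hΩ1 : ((1 : Matrix (Fin m) (Fin m) ℝ) - Ω).PosSemidef)
    (hM : M.PosSemidef) :
    (((β + ρ)⁻¹ • (β • Ω⁻¹ + ρ • (1 : Matrix (Fin m) (Fin m) ℝ) + M))⁻¹).PosDef ∧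
    ((1 : Matrix (Fin m) (Fin m) ℝ) -
      ((β + ρ)⁻¹ • (β • Ω⁻¹ + ρ • (1 : Matrix (Fin m) (Fin m) ℝ) + M))⁻¹).PosSemidef := by
  have hβρ : 0 < β + ρ := add_pos hβ hρ
  set B : Matrix (Fin m) (Fin m) ℝ :=
    (β + ρ)⁻¹ • (β • Ω⁻¹ + ρ • (1 : Matrix (Fin m) (Fin m) ℝ) + M) with hBdef
  have hBpd : B.PosDef := by
    apply posDef_smul _ (inv_pos.mpr hβρ)
    exact PosDef.add_posSemidef
      (PosDef.add_posSemidef (posDef_smul hΩ.inv hβ)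
        (posSemidef_smul Matrix.PosSemidef.one hρ.le)) hM
  have hΩinv1 : (Ω⁻¹ - 1 : Matrix (Fin m) (Fin m) ℝ).PosSemidef :=
    inv_sub_one_posSemidef hΩ hΩ1
  have hB1 : (B - 1).PosSemidef := by
    have h1 : B - 1 = (β + ρ)⁻¹ • (β • (Ω⁻¹ - 1) + M) := by
      rw [hBdef]
      match_scalars <;> field_simp
      ring
    rw [h1]
    exact posSemidef_smul ((posSemidef_smul hΩinv1 hβ.le).add hM) (inv_pos.mpr hβρ).le
  exact ⟨hBpd.inv, one_sub_inv_posSemidef hBpd hB1⟩
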